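/- Let p₁, p₂, p₃, p₄ be nonnegative reals with p₁ + p₂ + p₃ + p₄ = 1, let |Ψ₁⟩ = (e₀₀ + e₁₁)/√2, |Ψ₂⟩ = (e₀₀ − e₁₁)/√2, |Ψ₃⟩ = (e₀₁ + e₁₀)/√2, |Ψ₄⟩ = (e₀₁ − e₁₀)/√2 be the four Bell vectors in ℂ² ⊗ ℂ² (e_{ab} the standard basis), and let ρ = ∑_{i=1}^4 p_i |Ψ_i⟩⟨Ψ_i| be the corresponding Bell diagonal state. Then max_i p_i > 1/2 if and only if |tr(ρ (X⊗X))| + |tr(ρ (Y⊗Y))| + |tr(ρ (Z⊗Z))| > 1. -/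

import Mathlib

open Matrix Kronecker

noncomputable section

/-- The Pauli matrix X. -/
def PauliX : Matrix (Fin 2) (Fin 2) ℂ := !![0, 1; 1, 0]

/-- The Pauli matrix Y. -/
def PauliY : Matrix (Fin 2) (Fin 2) ℂ := !![0, -Complex.I; Complex.I, 0]

/-- The Pauli matrix Z. -/
def PauliZ : Matrix (Fin 2) (Fin 2) ℂ := !![1, 0; 0, -1]

/-- The four Bell vectors in ℂ² ⊗ ℂ². -/
def bellVec : Fin 4 → (Fin 2 × Fin 2 → ℂ) :=
  ![fun p => ((if p = (0, 0) then 1 else 0) + (if p = (1, 1) then 1 else 0)) / (Real.sqrt 2 : ℂ),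
    fun p => ((if p = (0, 0) then 1 else 0) - (if p = (1, 1) then 1 else 0)) / (Real.sqrt 2 : ℂ),
    fun p => ((if p = (0, 1) then 1 else 0) + (if p = (1, 0) then 1 else 0)) / (Real.sqrt 2 : ℂ),
    fun p => ((if p = (0, 1) then 1 else 0) - (if p = (1, 0) then 1 else 0)) / (Real.sqrt 2 : ℂ)]

/-- The Bell diagonal state with mixing weights `p`. -/
def bellDiagState (p : Fin 4 → ℝ) : Matrix (Fin 2 × Fin 2) (Fin 2 × Fin 2) ℂ :=
  ∑ i, (p i : ℂ) • Matrix.vecMulVec (bellVec i) (star (bellVec i))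

lemma sqrt2_sq : ((Real.sqrt 2 : ℂ)) * (Real.sqrt 2 : ℂ) = 2 := by
  rw [← Complex.ofReal_mul, Real.mul_self_sqrt (by norm_num)]; norm_num

lemma traceXX (p : Fin 4 → ℝ) :
    (bellDiagState p * (PauliX ⊗ₖ PauliX)).trace = ((p 0 - p 1 + p 2 - p 3 : ℝ) : ℂ) := by
  simp [Matrix.trace, bellDiagState, bellVec, PauliX, Matrix.mul_apply, vecMulVec_apply,
    kroneckerMap_apply, Fintype.sum_prod_type, Fin.sum_univ_succ, Matrix.diag]
  field_simp
  ring_nf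
  rw [sq, sqrt2_sq]

lemma traceYY (p : Fin 4 → ℝ) :
    (bellDiagState p * (PauliY ⊗ₖ PauliY)).trace = ((-p 0 + p 1 + p 2 - p 3 : ℝ) : ℂ) := by
  simp [Matrix.trace, bellDiagState, bellVec, PauliY, Matrix.mul_apply, vecMulVec_apply,
    kroneckerMap_apply, Fintype.sum_prod_type, Fin.sum_univ_succ, Matrix.diag]
  field_simp
  ring_nf
  rw [sq, sqrt2_sq]

lemma traceZZ (p : Fin 4 → ℝ) :
    (bellDiagState p * (PauliZ ⊗ₖ PauliZ)).trace = ((p 0 + p 1 - p 2 - p 3 : ℝ) : ℂ) := by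
  simp [Matrix.trace, bellDiagState, bellVec, PauliZ, Matrix.mul_apply, vecMulVec_apply,
    kroneckerMap_apply, Fintype.sum_prod_type, Fin.sum_univ_succ, Matrix.diag]
  field_simp
  ring_nf
  rw [sq, sqrt2_sq]

/-- A Bell diagonal state has some weight exceeding 1/2 (i.e. is entangled) iff the sum of the
absolute XX, YY, ZZ correlations exceeds 1. -/
theorem stmt_16 (p : Fin 4 → ℝ) (hp : ∀ i, 0 ≤ p i) (hsum : ∑ i, p i = 1) :
    (∃ i, 1 / 2 < p i) ↔
      1 < ‖(bellDiagState p * (PauliX ⊗ₖ PauliX)).trace‖ +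
          ‖(bellDiagState p * (PauliY ⊗ₖ PauliY)).trace‖ +
          ‖(bellDiagState p * (PauliZ ⊗ₖ PauliZ)).trace‖ := by
  rw [traceXX, traceYY, traceZZ, Complex.norm_real, Complex.norm_real, Complex.norm_real,
    Real.norm_eq_abs, Real.norm_eq_abs, Real.norm_eq_abs]
  simp only [Fin.sum_univ_four] at hsum
  have h0 := hp 0; have h1 := hp 1; have h2 := hp 2; have h3 := hp 3
  set a := p 0 - p 1 + p 2 - p 3 with ha
  set b := -p 0 + p 1 + p 2 - p 3 with hb
  set c := p 0 + p 1 - p 2 - p 3 with hc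
  constructor
  · rintro ⟨i, hi⟩
    have hA := le_abs_self a; have hA' := neg_abs_le a
    have hB := le_abs_self b; have hB' := neg_abs_le b
    have hC := le_abs_self c; have hC' := neg_abs_le c
    fin_cases i <;> simp at hi <;> linarith
  · intro h
    rcases abs_cases a with ⟨hA, _⟩ | ⟨hA, _⟩ <;>
    rcases abs_cases b with ⟨hB, _⟩ | ⟨hB, _⟩ <;>
    rcases abs_cases c with ⟨hC, _⟩ | ⟨hC, _⟩ <;>
    rw [hA, hB, hC] at h
    · exact ⟨3, by linarith⟩
    · exact ⟨2, by linarith⟩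
    · exact ⟨0, by linarith⟩
    · exact ⟨1, by linarith⟩
    · exact ⟨1, by linarith⟩
    · exact ⟨0, by linarith⟩
    · exact ⟨2, by linarith⟩
    · exact ⟨3, by linarith⟩

end
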